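/- Let V ∈ ℝ^{B×N}, W ∈ ℝ^{B×K}, H ∈ ℝ^{K×N} have all entries strictly positive, and let D_IS(X ‖ Y) = Σ_{i,n} ( X_{in}/Y_{in} − log(X_{in}/Y_{in}) − 1 ) denote the Itakura–Saito divergence between entrywise positive matrices of equal size. Define the updated matrix H⁺ entrywise by H⁺_{kn} = H_{kn} · sqrt( [ Wᵀ( V ⊙ (WH)^{⊙(−2)} ) ]_{kn} / [ Wᵀ(WH)^{⊙(−1)} ]_{kn} ). Then D_IS(V ‖ W H⁺) ≤ D_IS(V ‖ W H). -/

import Mathlib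

open Finset Matrix

/-- Itakura–Saito divergence between two entrywise positive matrices of equal size:
`D_IS(X‖Y) = Σ_{i,n} (X_{in}/Y_{in} − log(X_{in}/Y_{in}) − 1)`. -/
noncomputable def ISdiv {I N : Type*} [Fintype I] [Fintype N]
    (X Y : Matrix I N ℝ) : ℝ :=
  ∑ i, ∑ n, (X i n / Y i n - Real.log (X i n / Y i n) - 1)

/-- AM–GM step: the multiplicative update minimizes `h²p/h' + q h'` over `h'`. -/
lemma IS_NMF_amgm_step (h p q : ℝ) (hh : 0 < h) (hp : 0 < p) (hq : 0 < q) :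
    h ^ 2 * p / (h * Real.sqrt (p / q)) + q * (h * Real.sqrt (p / q))
      ≤ h ^ 2 * p / h + q * h := by
  set s := Real.sqrt (p / q) with hs_def
  have hs : 0 < s := Real.sqrt_pos.mpr (div_pos hp hq)
  have hs2 : s ^ 2 = p / q := Real.sq_sqrt (div_pos hp hq).le
  have hqp : q * s ^ 2 = p := by rw [hs2]; field_simp
  have e1 : h ^ 2 * p / (h * s) = h * p / s := by field_simp
  have e2 : h ^ 2 * p / h = h * p := by field_simp
  rw [e1, e2, ← sub_nonneg]
  have e3 : h * p + q * h - (h * p / s + q * (h * s)) = h * (q * (s - 1) ^ 2) := by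
    rw [← hqp]; field_simp; ring
  rw [e3]; positivity

/-- The majorization-minimization multiplicative activation update for
Itakura–Saito NMF does not increase the IS divergence. -/
theorem IS_NMF_activation_update_decreases_divergence
    (B K N : ℕ)
    (V : Matrix (Fin B) (Fin N) ℝ) (W : Matrix (Fin B) (Fin K) ℝ)
    (H : Matrix (Fin K) (Fin N) ℝ)
    (hV : ∀ b n, 0 < V b n) (hW : ∀ b k, 0 < W b k) (hH : ∀ k n, 0 < H k n)
    (Hplus : Matrix (Fin K) (Fin N) ℝ)
    (hHplus : ∀ k n, Hplus k n = H k n * Real.sqrt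
      (((Wᵀ * (Matrix.of fun (b : Fin B) (n : Fin N) =>
            V b n * ((W * H) b n)⁻¹ ^ 2) : Matrix (Fin K) (Fin N) ℝ) k n) /
       ((Wᵀ * (Matrix.of fun (b : Fin B) (n : Fin N) =>
            ((W * H) b n)⁻¹) : Matrix (Fin K) (Fin N) ℝ) k n))) :
    ISdiv V (W * Hplus) ≤ ISdiv V (W * H) := by
  classical
  -- trivial case B = 0
  rcases Nat.eq_zero_or_pos B with hB | hB
  · subst hB
    simp [ISdiv]
  -- trivial case K = 0
  rcases Nat.eq_zero_or_pos K with hK | hK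
  · subst hK
    have : W * Hplus = W * H := by
      ext b n
      simp [Matrix.mul_apply]
    rw [this]
  haveI : Nonempty (Fin B) := Fin.pos_iff_nonempty.mp hB
  -- abbreviations
  set Xm : Fin B → Fin N → ℝ := fun b n => (W * H) b n with hXm_def
  have hXm : ∀ b n, Xm b n = ∑ k, W b k * H k n := by
    intro b n; simp [hXm_def, Matrix.mul_apply]
  have hX : ∀ b n, 0 < Xm b n := by
    intro b n
    rw [hXm]
    exact Finset.sum_pos (fun k _ => mul_pos (hW b k) (hH k n)) ⟨⟨0, hK⟩, mem_univ _⟩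
  set P : Fin K → Fin N → ℝ := fun k n => ∑ b, W b k * (V b n * (Xm b n)⁻¹ ^ 2) with hP_def
  set Q : Fin K → Fin N → ℝ := fun k n => ∑ b, W b k * (Xm b n)⁻¹ with hQ_def
  have hP : ∀ k n, 0 < P k n := fun k n =>
    Finset.sum_pos (fun b _ => mul_pos (hW b k)
      (mul_pos (hV b n) (pow_pos (inv_pos.mpr (hX b n)) 2))) univ_nonempty
  have hQ : ∀ k n, 0 < Q k n := fun k n =>
    Finset.sum_pos (fun b _ => mul_pos (hW b k) (inv_pos.mpr (hX b n))) univ_nonempty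
  have hHp : ∀ k n, Hplus k n = H k n * Real.sqrt (P k n / Q k n) := by
    intro k n
    rw [hHplus k n]
    congr 2
  have hHpos : ∀ k n, 0 < Hplus k n := by
    intro k n
    rw [hHp]
    exact mul_pos (hH k n) (Real.sqrt_pos.mpr (div_pos (hP k n) (hQ k n)))
  -- the auxiliary (majorizing) function
  set G : Matrix (Fin K) (Fin N) ℝ → ℝ := fun H' =>
    ∑ b, ∑ n, (V b n * ∑ k, W b k * H k n ^ 2 / (Xm b n ^ 2 * H' k n)
      + Real.log (Xm b n) + (∑ k, W b k * (H' k n - H k n)) / Xm b n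
      - Real.log (V b n) - 1) with hG_def
  -- the H'-independent part
  set R : ℝ := ∑ b, ∑ n,
    (Real.log (Xm b n) - (∑ k, W b k * H k n) / Xm b n - Real.log (V b n) - 1) with hR_def
  -- Step 0 : splitting of G
  have Gsplit : ∀ H' : Matrix (Fin K) (Fin N) ℝ, (∀ k n, 0 < H' k n) →
      G H' = (∑ n, ∑ k, (H k n ^ 2 * P k n / H' k n + Q k n * H' k n)) + R := by
    intro H' hH'
    have key : ∀ b n, V b n * ∑ k, W b k * H k n ^ 2 / (Xm b n ^ 2 * H' k n)
        + Real.log (Xm b n) + (∑ k, W b k * (H' k n - H k n)) / Xm b n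
        - Real.log (V b n) - 1
        = (∑ k, (W b k * (V b n * (Xm b n)⁻¹ ^ 2) * (H k n ^ 2 / H' k n)
            + W b k * (Xm b n)⁻¹ * H' k n))
          + (Real.log (Xm b n) - (∑ k, W b k * H k n) / Xm b n
            - Real.log (V b n) - 1) := by
      intro b n
      rw [Finset.mul_sum, Finset.sum_div, Finset.sum_add_distrib, Finset.sum_div]
      have e1 : ∀ k : Fin K, V b n * (W b k * H k n ^ 2 / (Xm b n ^ 2 * H' k n))
          = W b k * (V b n * (Xm b n)⁻¹ ^ 2) * (H k n ^ 2 / H' k n) := by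
        intro k
        have h1 := (hX b n).ne'
        have h2 := (hH' k n).ne'
        field_simp
      have e2 : ∀ k : Fin K, W b k * (H' k n - H k n) / Xm b n
          = W b k * (Xm b n)⁻¹ * H' k n - W b k * H k n / Xm b n := by
        intro k
        have h1 := (hX b n).ne'
        field_simp
      rw [Finset.sum_congr rfl fun k _ => e1 k, Finset.sum_congr rfl fun k _ => e2 k,
        Finset.sum_sub_distrib]
      ring
    calc G H' = ∑ b, ∑ n,
        ((∑ k, (W b k * (V b n * (Xm b n)⁻¹ ^ 2) * (H k n ^ 2 / H' k n)
            + W b k * (Xm b n)⁻¹ * H' k n))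
          + (Real.log (Xm b n) - (∑ k, W b k * H k n) / Xm b n
            - Real.log (V b n) - 1)) := by
          rw [hG_def]
          exact Finset.sum_congr rfl fun b _ => Finset.sum_congr rfl fun n _ => key b n
      _ = (∑ b, ∑ n, ∑ k, (W b k * (V b n * (Xm b n)⁻¹ ^ 2) * (H k n ^ 2 / H' k n)
            + W b k * (Xm b n)⁻¹ * H' k n)) + R := by
          rw [hR_def, ← Finset.sum_add_distrib]
          refine Finset.sum_congr rfl fun b _ => ?_
          rw [← Finset.sum_add_distrib]
      _ = (∑ n, ∑ k, (H k n ^ 2 * P k n / H' k n + Q k n * H' k n)) + R := by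
          congr 1
          rw [Finset.sum_comm]
          refine Finset.sum_congr rfl fun n _ => ?_
          rw [Finset.sum_comm]
          refine Finset.sum_congr rfl fun k _ => ?_
          rw [Finset.sum_add_distrib, ← Finset.sum_mul, ← Finset.sum_mul]
          rw [hP_def, hQ_def]
          ring
  -- Step 1 : majorization  ISdiv V (W * Hplus) ≤ G Hplus
  have step1 : ISdiv V (W * Hplus) ≤ G Hplus := by
    rw [ISdiv, hG_def]
    refine Finset.sum_le_sum fun b _ => Finset.sum_le_sum fun n _ => ?_
    set x' : ℝ := (W * Hplus) b n with hx'_def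
    have hx'sum : x' = ∑ k, W b k * Hplus k n := by
      simp [hx'_def, Matrix.mul_apply]
    have hx' : 0 < x' := by
      rw [hx'sum]
      exact Finset.sum_pos (fun k _ => mul_pos (hW b k) (hHpos k n)) ⟨⟨0, hK⟩, mem_univ _⟩
    -- convex part : Cauchy–Schwarz (Sedrakyan)
    have cs : Xm b n ^ 2 / x' ≤ ∑ k, (W b k * H k n) ^ 2 / (W b k * Hplus k n) := by
      rw [hXm, hx'sum]
      exact Finset.sq_sum_div_le_sum_sq_div univ (fun k => W b k * H k n)
        (fun k _ => mul_pos (hW b k) (hHpos k n))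
    have hSrw : (∑ k, W b k * H k n ^ 2 / (Xm b n ^ 2 * Hplus k n))
        = (∑ k, (W b k * H k n) ^ 2 / (W b k * Hplus k n)) / Xm b n ^ 2 := by
      rw [Finset.sum_div]
      refine Finset.sum_congr rfl fun k _ => ?_
      have h1 := (hW b k).ne'
      have h2 := (hHpos k n).ne'
      have h3 := (hX b n).ne'
      field_simp
    have convpart : V b n / x' ≤ V b n * ∑ k, W b k * H k n ^ 2 / (Xm b n ^ 2 * Hplus k n) := by
      have h1 : (1 : ℝ) / x' ≤ ∑ k, W b k * H k n ^ 2 / (Xm b n ^ 2 * Hplus k n) := by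
        rw [hSrw, div_le_div_iff₀ hx' (pow_pos (hX b n) 2), one_mul]
        rw [div_le_iff₀ hx'] at cs
        linarith
      calc V b n / x' = V b n * (1 / x') := by ring
        _ ≤ V b n * ∑ k, W b k * H k n ^ 2 / (Xm b n ^ 2 * Hplus k n) :=
            mul_le_mul_of_nonneg_left h1 (hV b n).le
    -- concave part : tangent inequality for log
    have logpart : Real.log x' ≤ Real.log (Xm b n) + (x' - Xm b n) / Xm b n := by
      have h1 : Real.log (x' / Xm b n) ≤ x' / Xm b n - 1 :=
        Real.log_le_sub_one_of_pos (div_pos hx' (hX b n))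
      rw [Real.log_div hx'.ne' (hX b n).ne'] at h1
      have h2 : x' / Xm b n - 1 = (x' - Xm b n) / Xm b n := by
        rw [sub_div, div_self (hX b n).ne']
      linarith [h1, h2 ▸ h1]
    have hdiff : (∑ k, W b k * (Hplus k n - H k n)) = x' - Xm b n := by
      rw [hx'sum, hXm, ← Finset.sum_sub_distrib]
      exact Finset.sum_congr rfl fun k _ => by ring
    have hlogdiv : Real.log (V b n / x') = Real.log (V b n) - Real.log x' :=
      Real.log_div (hV b n).ne' hx'.ne'
    rw [hlogdiv, hdiff]
    linarith
  -- Step 2 : G H = ISdiv V (W * H)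
  have step2 : G H = ISdiv V (W * H) := by
    rw [ISdiv, hG_def]
    refine Finset.sum_congr rfl fun b _ => Finset.sum_congr rfl fun n _ => ?_
    have e1 : (∑ k, W b k * H k n ^ 2 / (Xm b n ^ 2 * H k n))
        = (∑ k, W b k * H k n) / Xm b n ^ 2 := by
      rw [Finset.sum_div]
      refine Finset.sum_congr rfl fun k _ => ?_
      have h2 := (hH k n).ne'
      have h3 := (hX b n).ne'
      field_simp
    have e2 : (∑ k, W b k * (H k n - H k n)) = 0 := by simp
    have e3 : Real.log (V b n / Xm b n) = Real.log (V b n) - Real.log (Xm b n) :=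
      Real.log_div (hV b n).ne' (hX b n).ne'
    rw [e1, e2, e3, ← hXm]
    have h3 := (hX b n).ne'
    field_simp
    have h5 : (W * H) b n = Xm b n := rfl
    have h6 : Xm b n * (V b n / Xm b n) = V b n := by field_simp
    rw [h5, mul_sub, mul_sub, h6]
    ring
  -- Step 3 : G Hplus ≤ G H  (separable AM–GM minimization)
  have step3 : G Hplus ≤ G H := by
    rw [Gsplit Hplus hHpos, Gsplit H hH]
    have : (∑ n, ∑ k, (H k n ^ 2 * P k n / Hplus k n + Q k n * Hplus k n))
        ≤ ∑ n, ∑ k, (H k n ^ 2 * P k n / H k n + Q k n * H k n) := by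
      refine Finset.sum_le_sum fun n _ => Finset.sum_le_sum fun k _ => ?_
      rw [hHp k n]
      exact IS_NMF_amgm_step (H k n) (P k n) (Q k n) (hH k n) (hP k n) (hQ k n)
    linarith
  calc ISdiv V (W * Hplus) ≤ G Hplus := step1
    _ ≤ G H := step3
    _ = ISdiv V (W * H) := step2
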